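/- Let p be an odd prime with p ≡ 1 (mod 4), and let φ : Multiplicative (ZMod 4) →* MulAut (Multiplicative (ZMod p)) be an injective homomorphism. Then any two subgroups of order 2 of the semidirect product (Multiplicative (ZMod p)) ⋊[φ] (Multiplicative (ZMod 4)) are conjugate. -/

import Mathlib

section aux

variable {G : Type*} [Group G]

private lemma exists_gen_of_card_two (H : Subgroup G) (h : Nat.card H = 2) :
    ∃ x : G, orderOf x = 2 ∧ H = Subgroup.zpowers x := by
  have : Finite H := Nat.finite_of_card_ne_zero (by omega)
  have : Fact (Nat.Prime 2) := ⟨Nat.prime_two⟩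
  have := isCyclic_of_prime_card h
  obtain ⟨g, hg⟩ := IsCyclic.exists_ofOrder_eq_natCard (α := H)
  have hord : orderOf (g : G) = 2 := by rw [Subgroup.orderOf_coe, hg, h]
  have hle : Subgroup.zpowers (g : G) ≤ H := Subgroup.zpowers_le.2 g.2
  refine ⟨(g : G), hord, (Subgroup.eq_of_le_of_card_ge hle ?_).symm⟩
  rw [h, Nat.card_zpowers, hord]

end aux

/-- Let `p` be an odd prime with `p ≡ 1 (mod 4)` and let `φ` be an injective homomorphism
from `C₄` to the automorphism group of `C_p`. Then any two subgroups of order 2 of the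
semidirect product `C_p ⋊[φ] C₄` are conjugate. -/
theorem semidirect_Cp_C4_order_two_subgroups_conjugate (p : ℕ) [Fact p.Prime] (hp : Odd p)
    (hp4 : p % 4 = 1)
    (φ : Multiplicative (ZMod 4) →* MulAut (Multiplicative (ZMod p)))
    (hφ : Function.Injective φ) :
    ∀ H K : Subgroup (Multiplicative (ZMod p) ⋊[φ] Multiplicative (ZMod 4)),
      Nat.card H = 2 → Nat.card K = 2 →
        ∃ g : Multiplicative (ZMod p) ⋊[φ] Multiplicative (ZMod 4),
          K = Subgroup.map (MulAut.conj g).toMonoidHom H := by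
  intro H K hH hK
  -- the field ZMod p
  haveI : NeZero p := ⟨(Fact.out : p.Prime).ne_zero⟩
  have hp2 : (2 : ZMod p) ≠ 0 := by
    intro h
    have h2 : (p : ℕ) ∣ 2 := (ZMod.natCast_eq_zero_iff 2 p).1 (by exact_mod_cast h)
    have := (Nat.prime_dvd_prime_iff_eq Fact.out Nat.prime_two).1 h2
    omega
  -- the distinguished element of C4
  have hC4 : ∀ r : Multiplicative (ZMod 4), r * r = 1 →
      r = 1 ∨ r = Multiplicative.ofAdd (2 : ZMod 4) := by decide
  set t : Multiplicative (ZMod 4) := Multiplicative.ofAdd (2 : ZMod 4) with ht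
  have ht1 : t ≠ 1 := by decide
  -- classification of elements of order 2
  have key : ∀ x : Multiplicative (ZMod p) ⋊[φ] Multiplicative (ZMod 4),
      orderOf x = 2 → x.right = t := by
    intro x hx
    have hx1 : x ≠ 1 := by rintro rfl; simp at hx
    have hxx : x * x = 1 := by
      have := pow_orderOf_eq_one x; rwa [hx, pow_two] at this
    have hr : x.right * x.right = 1 := by
      have := congrArg SemidirectProduct.right hxx
      simpa using this
    have hr' : x.right = 1 ∨ x.right = t := hC4 _ hr
    rcases hr' with hr1 | hr2
    · exfalso
      have hl : x.left * φ x.right x.left = 1 := by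
        have := congrArg SemidirectProduct.left hxx
        simpa using this
      rw [hr1] at hl
      simp only [map_one, MulAut.one_apply] at hl
      have : x.left.toAdd + x.left.toAdd = 0 := by
        have := congrArg Multiplicative.toAdd hl
        simpa using this
      have : (2 : ZMod p) * x.left.toAdd = 0 := by rw [two_mul]; exact this
      have hl0 : x.left = 1 := by
        rcases mul_eq_zero.1 this with h | h
        · exact absurd h hp2
        · exact Multiplicative.toAdd.injective (by simpa using h)
      exact hx1 (SemidirectProduct.ext hl0 hr1)
    · exact hr2
  obtain ⟨x, hx, rfl⟩ := exists_gen_of_card_two H hH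
  obtain ⟨y, hy, rfl⟩ := exists_gen_of_card_two K hK
  have hxr := key x hx
  have hyr := key y hy
  -- the automorphism σ = φ t acts as multiplication by u
  set σ : MulAut (Multiplicative (ZMod p)) := φ t with hσ
  set u : ZMod p := (σ (Multiplicative.ofAdd (1 : ZMod p))).toAdd with hu
  have hlin : ∀ z : ZMod p, (σ (Multiplicative.ofAdd z)).toAdd = z * u := by
    intro z
    have h1 : Multiplicative.ofAdd z = (Multiplicative.ofAdd (1 : ZMod p)) ^ z.val := by
      apply Multiplicative.toAdd.injective
      simp [nsmul_eq_mul, ZMod.natCast_val, ZMod.cast_id]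
    rw [h1, map_pow]
    simp [nsmul_eq_mul, ZMod.natCast_val, ZMod.cast_id, hu, mul_comm]
  have hu1 : u ≠ 1 := by
    intro h
    apply ht1
    apply hφ
    rw [← hσ, map_one]
    ext m
    have := hlin m.toAdd
    rw [h, mul_one] at this
    have hm : σ m = m := by simpa using this
    simp [hm]
  -- find conjugating element
  set c : ZMod p := (y.left.toAdd - x.left.toAdd) / (1 - u) with hc
  have hcu : c - c * u = y.left.toAdd - x.left.toAdd := by
    have h1u : (1 : ZMod p) - u ≠ 0 := sub_ne_zero.2 (Ne.symm hu1)
    rw [← mul_one_sub, hc, div_mul_cancel₀ _ h1u]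
  refine ⟨⟨Multiplicative.ofAdd c, 1⟩, ?_⟩
  have hgx : (MulAut.conj (⟨Multiplicative.ofAdd c, 1⟩ :
      Multiplicative (ZMod p) ⋊[φ] Multiplicative (ZMod 4))) x = y := by
    ext
    · -- left component
      show ((⟨Multiplicative.ofAdd c, 1⟩ * x * (⟨Multiplicative.ofAdd c, 1⟩ :
        Multiplicative (ZMod p) ⋊[φ] Multiplicative (ZMod 4))⁻¹)).left = y.left
      rw [SemidirectProduct.mul_left, SemidirectProduct.mul_left,
        SemidirectProduct.inv_left, SemidirectProduct.mul_right]
      simp only [map_one, MulAut.one_apply, one_mul, inv_one, mul_one, hxr]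
      apply Multiplicative.toAdd.injective
      rw [toAdd_mul, toAdd_mul]
      have : (φ t (Multiplicative.ofAdd c)⁻¹).toAdd = -(c * u) := by
        rw [← ofAdd_neg]
        exact (hlin (-c)).trans (by ring)
      rw [this]
      simp only [toAdd_ofAdd]
      linear_combination hcu
    · show ((⟨Multiplicative.ofAdd c, 1⟩ * x * (⟨Multiplicative.ofAdd c, 1⟩ :
        Multiplicative (ZMod p) ⋊[φ] Multiplicative (ZMod 4))⁻¹)).right = y.right
      rw [SemidirectProduct.mul_right, SemidirectProduct.mul_right,
        SemidirectProduct.inv_right]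
      rw [hxr, hyr]
      group
  rw [← hgx]
  exact (MonoidHom.map_zpowers
    ((MulAut.conj (⟨Multiplicative.ofAdd c, 1⟩ :
      Multiplicative (ZMod p) ⋊[φ] Multiplicative (ZMod 4))).toMonoidHom) x).symm
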